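/- Let f : ℝ → ℝ be differentiable on an open interval containing [a,b] ⊆ [0,∞) with a < b, let q > 1 and s ∈ (0,1), and suppose |f'|^q is s-convex in the second sense on [a,b]. Then |(f(a)+f(b))/2 - (1/(b-a)) ∫_a^b f(x) dx| ≤ ((b-a)/2) · ((q-1)/(2(2q-1)))^((q-1)/q) · (1/(2(s+1)))^(1/q) · [ (|f'(a)|^q + |f'((a+b)/2)|^q)^(1/q) + (|f'((a+b)/2)|^q + |f'(b)|^q)^(1/q) ]. -/

import Mathlib

open MeasureTheory Set intervalIntegral Real



lemma half_holder (g : ℝ → ℝ) (α β ga gb p q s : ℝ) (hαβ : α < β)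
    (hq : 1 < q) (hp : p = q / (q - 1)) (hs : 0 < s)
    (hmeas : AEStronglyMeasurable g (volume.restrict (Set.Ioc α β)))
    (hga : 0 ≤ ga) (hgb : 0 ≤ gb)
    (hbound : ∀ x ∈ Set.Icc α β,
      |g x| ^ q ≤ ((β - x) ^ s * ga + (x - α) ^ s * gb) / (β - α) ^ s) :
    ∫ x in α..β, (β - x) * |g x|
      ≤ ((β - α) ^ (p + 1) / (p + 1)) ^ (1 / p)
        * ((β - α) / (s + 1) * (ga + gb)) ^ (1 / q) := by
  have hβα : (0:ℝ) < β - α := sub_pos.2 hαβ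
  have hq0 : (0:ℝ) < q := lt_trans one_pos hq
  have hpq : p.HolderConjugate q := by
    rw [hp]; exact (Real.HolderConjugate.conjExponent hq).symm
  have hp1 : 1 < p := by rw [hp, lt_div_iff₀ (by linarith)]; linarith
  haveI : Fact (volume (Set.Ioc α β) < ⊤) := ⟨measure_Ioc_lt_top⟩
  set μ := volume.restrict (Set.Ioc α β) with hμ
  -- crude bound
  have hC : ∀ x ∈ Set.Icc α β, |g x| ^ q ≤ ga + gb := by
    intro x hx
    refine (hbound x hx).trans ?_
    rw [div_le_iff₀ (Real.rpow_pos_of_pos hβα s)]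
    have h1 : (β - x) ^ s ≤ (β - α) ^ s :=
      Real.rpow_le_rpow (by linarith [hx.2]) (by linarith [hx.1]) hs.le
    have h2 : (x - α) ^ s ≤ (β - α) ^ s :=
      Real.rpow_le_rpow (by linarith [hx.1]) (by linarith [hx.2]) hs.le
    nlinarith [Real.rpow_pos_of_pos hβα s]
  have habs : ∀ x ∈ Set.Icc α β, |g x| ≤ (ga + gb) ^ (1 / q) := by
    intro x hx
    have h := hC x hx
    calc |g x| = (|g x| ^ q) ^ (1 / q) := by
          rw [← Real.rpow_mul (abs_nonneg _), mul_one_div_cancel hq0.ne', Real.rpow_one]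
      _ ≤ (ga + gb) ^ (1 / q) :=
          Real.rpow_le_rpow (Real.rpow_nonneg (abs_nonneg _) q) h (by positivity)
  -- Memℒp facts
  have hFm : MeasureTheory.MemLp (fun x => β - x) (ENNReal.ofReal p) μ := by
    refine MeasureTheory.MemLp.of_bound
      (continuous_const.sub continuous_id).aestronglyMeasurable (β - α) ?_
    refine (ae_restrict_iff' measurableSet_Ioc).2 (ae_of_all _ fun x hx => ?_)
    rw [Real.norm_eq_abs, abs_of_nonneg (by linarith [hx.2] : (0:ℝ) ≤ β - x)]
    linarith [hx.1.le]
  have hGm : MeasureTheory.MemLp (fun x => |g x|) (ENNReal.ofReal q) μ := by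
    refine MeasureTheory.MemLp.of_bound ?_ ((ga + gb) ^ (1 / q)) ?_
    · simpa [Real.norm_eq_abs] using hmeas.norm
    · refine (ae_restrict_iff' measurableSet_Ioc).2 (ae_of_all _ fun x hx => ?_)
      rw [Real.norm_eq_abs, abs_abs]
      exact habs x (Set.Ioc_subset_Icc_self hx)
  have hF0 : 0 ≤ᵐ[μ] fun x => β - x := by
    refine (ae_restrict_iff' measurableSet_Ioc).2 (ae_of_all _ fun x hx => by
      simp only [Pi.zero_apply]; linarith [hx.2])
  have hG0 : 0 ≤ᵐ[μ] fun x => |g x| := ae_of_all _ fun x => abs_nonneg _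
  have hH := MeasureTheory.integral_mul_le_Lp_mul_Lq_of_nonneg (μ := μ) hpq hF0 hG0 hFm hGm
  -- value of the p-integral
  have hFp : ∫ x, (β - x) ^ p ∂μ = (β - α) ^ (p + 1) / (p + 1) := by
    rw [hμ, ← intervalIntegral.integral_of_le hαβ.le,
      intervalIntegral.integral_comp_sub_left (fun y => y ^ p) β, sub_self,
      integral_rpow (Or.inl (by linarith))]
    rw [Real.zero_rpow (by positivity), sub_zero]
  -- bound on the q-integral
  have i1 : IntervalIntegrable (fun x => (β - x) ^ s) volume α β := by
    have := (intervalIntegrable_rpow' (a := 0) (b := β - α) (r := s)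
      (by linarith)).comp_sub_left β
    simpa using this.symm
  have i2 : IntervalIntegrable (fun x => (x - α) ^ s) volume α β := by
    have := (intervalIntegrable_rpow' (a := 0) (b := β - α) (r := s)
      (by linarith)).comp_sub_right α
    simpa using this
  have hint2 : IntervalIntegrable
      (fun x => ((β - x) ^ s * ga + (x - α) ^ s * gb) / (β - α) ^ s) volume α β :=
    ((i1.mul_const ga).add (i2.mul_const gb)).div_const _
  have hint1 : IntervalIntegrable (fun x => |g x| ^ q) volume α β := by
    rw [intervalIntegrable_iff, uIoc_of_le hαβ.le]
    have := hGm.integrable_norm_rpow (by simp [hq0]) (by simp)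
    have h2 : Integrable (fun x => |g x| ^ q) μ := by
      simpa [ENNReal.toReal_ofReal hq0.le, Real.norm_eq_abs, abs_abs] using this
    exact h2
  have e1 : ∫ x in α..β, (β - x) ^ s = (β - α) ^ (s + 1) / (s + 1) := by
    rw [intervalIntegral.integral_comp_sub_left (fun y => y ^ s) β, sub_self,
      integral_rpow (Or.inl (by linarith))]
    rw [Real.zero_rpow (by positivity), sub_zero]
  have e2 : ∫ x in α..β, (x - α) ^ s = (β - α) ^ (s + 1) / (s + 1) := by
    rw [intervalIntegral.integral_comp_sub_right (fun y => y ^ s) α, sub_self,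
      integral_rpow (Or.inl (by linarith))]
    rw [Real.zero_rpow (by positivity), sub_zero]
  have hGq : ∫ x, |g x| ^ q ∂μ ≤ (β - α) / (s + 1) * (ga + gb) := by
    rw [hμ, ← intervalIntegral.integral_of_le hαβ.le]
    calc ∫ x in α..β, |g x| ^ q
        ≤ ∫ x in α..β, ((β - x) ^ s * ga + (x - α) ^ s * gb) / (β - α) ^ s :=
          intervalIntegral.integral_mono_on hαβ.le hint1 hint2 hbound
      _ = (β - α) / (s + 1) * (ga + gb) := by
          rw [intervalIntegral.integral_div,
            intervalIntegral.integral_add (i1.mul_const ga) (i2.mul_const gb),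
            intervalIntegral.integral_mul_const, intervalIntegral.integral_mul_const, e1, e2]
          rw [show s + 1 = s + (1:ℝ) from rfl, Real.rpow_add hβα s 1, Real.rpow_one]
          have h1 : (β - α) ^ s ≠ 0 := (Real.rpow_pos_of_pos hβα s).ne'
          field_simp
  -- combine
  rw [intervalIntegral.integral_of_le hαβ.le]
  refine le_trans hH ?_
  rw [hFp]
  have hnn : (0:ℝ) ≤ ((β - α) ^ (p + 1) / (p + 1)) ^ (1 / p) := by positivity
  refine mul_le_mul_of_nonneg_left ?_ hnn
  exact Real.rpow_le_rpow (integral_nonneg fun x => Real.rpow_nonneg (abs_nonneg _) q)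
    hGq (by positivity)


lemma half_holder2 (g : ℝ → ℝ) (α β ga gb p q s : ℝ) (hαβ : α < β)
    (hq : 1 < q) (hp : p = q / (q - 1)) (hs : 0 < s)
    (hmeas : AEStronglyMeasurable g (volume.restrict (Set.Ioc α β)))
    (hga : 0 ≤ ga) (hgb : 0 ≤ gb)
    (hbound : ∀ x ∈ Set.Icc α β,
      |g x| ^ q ≤ ((β - x) ^ s * ga + (x - α) ^ s * gb) / (β - α) ^ s) :
    ∫ x in α..β, (x - α) * |g x|
      ≤ ((β - α) ^ (p + 1) / (p + 1)) ^ (1 / p)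
        * ((β - α) / (s + 1) * (ga + gb)) ^ (1 / q) := by
  have hβα : (0:ℝ) < β - α := sub_pos.2 hαβ
  have hq0 : (0:ℝ) < q := lt_trans one_pos hq
  have hpq : p.HolderConjugate q := by
    rw [hp]; exact (Real.HolderConjugate.conjExponent hq).symm
  have hp1 : 1 < p := by rw [hp, lt_div_iff₀ (by linarith)]; linarith
  haveI : Fact (volume (Set.Ioc α β) < ⊤) := ⟨measure_Ioc_lt_top⟩
  set μ := volume.restrict (Set.Ioc α β) with hμ
  -- crude bound
  have hC : ∀ x ∈ Set.Icc α β, |g x| ^ q ≤ ga + gb := by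
    intro x hx
    refine (hbound x hx).trans ?_
    rw [div_le_iff₀ (Real.rpow_pos_of_pos hβα s)]
    have h1 : (β - x) ^ s ≤ (β - α) ^ s :=
      Real.rpow_le_rpow (by linarith [hx.2]) (by linarith [hx.1]) hs.le
    have h2 : (x - α) ^ s ≤ (β - α) ^ s :=
      Real.rpow_le_rpow (by linarith [hx.1]) (by linarith [hx.2]) hs.le
    nlinarith [Real.rpow_pos_of_pos hβα s]
  have habs : ∀ x ∈ Set.Icc α β, |g x| ≤ (ga + gb) ^ (1 / q) := by
    intro x hx
    have h := hC x hx
    calc |g x| = (|g x| ^ q) ^ (1 / q) := by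
          rw [← Real.rpow_mul (abs_nonneg _), mul_one_div_cancel hq0.ne', Real.rpow_one]
      _ ≤ (ga + gb) ^ (1 / q) :=
          Real.rpow_le_rpow (Real.rpow_nonneg (abs_nonneg _) q) h (by positivity)
  -- Memℒp facts
  have hFm : MeasureTheory.MemLp (fun x => x - α) (ENNReal.ofReal p) μ := by
    refine MeasureTheory.MemLp.of_bound
      (continuous_id.sub continuous_const).aestronglyMeasurable (β - α) ?_
    refine (ae_restrict_iff' measurableSet_Ioc).2 (ae_of_all _ fun x hx => ?_)
    rw [Real.norm_eq_abs, abs_of_nonneg (by linarith [hx.1.le] : (0:ℝ) ≤ x - α)]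
    linarith [hx.2]
  have hGm : MeasureTheory.MemLp (fun x => |g x|) (ENNReal.ofReal q) μ := by
    refine MeasureTheory.MemLp.of_bound ?_ ((ga + gb) ^ (1 / q)) ?_
    · simpa [Real.norm_eq_abs] using hmeas.norm
    · refine (ae_restrict_iff' measurableSet_Ioc).2 (ae_of_all _ fun x hx => ?_)
      rw [Real.norm_eq_abs, abs_abs]
      exact habs x (Set.Ioc_subset_Icc_self hx)
  have hF0 : 0 ≤ᵐ[μ] fun x => x - α := by
    refine (ae_restrict_iff' measurableSet_Ioc).2 (ae_of_all _ fun x hx => by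
      simp only [Pi.zero_apply]; linarith [hx.1.le])
  have hG0 : 0 ≤ᵐ[μ] fun x => |g x| := ae_of_all _ fun x => abs_nonneg _
  have hH := MeasureTheory.integral_mul_le_Lp_mul_Lq_of_nonneg (μ := μ) hpq hF0 hG0 hFm hGm
  -- value of the p-integral
  have hFp : ∫ x, (x - α) ^ p ∂μ = (β - α) ^ (p + 1) / (p + 1) := by
    rw [hμ, ← intervalIntegral.integral_of_le hαβ.le,
      intervalIntegral.integral_comp_sub_right (fun y => y ^ p) α, sub_self,
      integral_rpow (Or.inl (by linarith))]
    rw [Real.zero_rpow (by positivity), sub_zero]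
  -- bound on the q-integral
  have i1 : IntervalIntegrable (fun x => (β - x) ^ s) volume α β := by
    have := (intervalIntegrable_rpow' (a := 0) (b := β - α) (r := s)
      (by linarith)).comp_sub_left β
    simpa using this.symm
  have i2 : IntervalIntegrable (fun x => (x - α) ^ s) volume α β := by
    have := (intervalIntegrable_rpow' (a := 0) (b := β - α) (r := s)
      (by linarith)).comp_sub_right α
    simpa using this
  have hint2 : IntervalIntegrable
      (fun x => ((β - x) ^ s * ga + (x - α) ^ s * gb) / (β - α) ^ s) volume α β :=
    ((i1.mul_const ga).add (i2.mul_const gb)).div_const _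
  have hint1 : IntervalIntegrable (fun x => |g x| ^ q) volume α β := by
    rw [intervalIntegrable_iff, uIoc_of_le hαβ.le]
    have := hGm.integrable_norm_rpow (by simp [hq0]) (by simp)
    have h2 : Integrable (fun x => |g x| ^ q) μ := by
      simpa [ENNReal.toReal_ofReal hq0.le, Real.norm_eq_abs, abs_abs] using this
    exact h2
  have e1 : ∫ x in α..β, (β - x) ^ s = (β - α) ^ (s + 1) / (s + 1) := by
    rw [intervalIntegral.integral_comp_sub_left (fun y => y ^ s) β, sub_self,
      integral_rpow (Or.inl (by linarith))]
    rw [Real.zero_rpow (by positivity), sub_zero]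
  have e2 : ∫ x in α..β, (x - α) ^ s = (β - α) ^ (s + 1) / (s + 1) := by
    rw [intervalIntegral.integral_comp_sub_right (fun y => y ^ s) α, sub_self,
      integral_rpow (Or.inl (by linarith))]
    rw [Real.zero_rpow (by positivity), sub_zero]
  have hGq : ∫ x, |g x| ^ q ∂μ ≤ (β - α) / (s + 1) * (ga + gb) := by
    rw [hμ, ← intervalIntegral.integral_of_le hαβ.le]
    calc ∫ x in α..β, |g x| ^ q
        ≤ ∫ x in α..β, ((β - x) ^ s * ga + (x - α) ^ s * gb) / (β - α) ^ s :=
          intervalIntegral.integral_mono_on hαβ.le hint1 hint2 hbound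
      _ = (β - α) / (s + 1) * (ga + gb) := by
          rw [intervalIntegral.integral_div,
            intervalIntegral.integral_add (i1.mul_const ga) (i2.mul_const gb),
            intervalIntegral.integral_mul_const, intervalIntegral.integral_mul_const, e1, e2]
          rw [show s + 1 = s + (1:ℝ) from rfl, Real.rpow_add hβα s 1, Real.rpow_one]
          have h1 : (β - α) ^ s ≠ 0 := (Real.rpow_pos_of_pos hβα s).ne'
          field_simp
  -- combine
  rw [intervalIntegral.integral_of_le hαβ.le]
  refine le_trans hH ?_
  rw [hFp]
  have hnn : (0:ℝ) ≤ ((β - α) ^ (p + 1) / (p + 1)) ^ (1 / p) := by positivity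
  refine mul_le_mul_of_nonneg_left ?_ hnn
  exact Real.rpow_le_rpow (integral_nonneg fun x => Real.rpow_nonneg (abs_nonneg _) q)
    hGq (by positivity)


lemma const_id (p q s h : ℝ) (hq : 1 < q) (hp : p = q / (q - 1)) (hs : 0 < s) (hh : 0 < h) :
    (1 / (2 * h)) * ((h ^ (p + 1) / (p + 1)) ^ (1 / p) * (h / (s + 1)) ^ (1 / q))
      = h * ((q - 1) / (2 * (2 * q - 1))) ^ ((q - 1) / q) * (1 / (2 * (s + 1))) ^ (1 / q) := by
  have hq1 : (0:ℝ) < q - 1 := by linarith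
  have hq0 : (0:ℝ) < q := by linarith
  have hp1 : 1 < p := by rw [hp]; rw [lt_div_iff₀ hq1]; linarith
  have hp0 : (0:ℝ) < p := by linarith
  have hs1 : (0:ℝ) < s + 1 := by linarith
  have e4 : 1 / p + 1 / q = 1 := by rw [hp]; field_simp; ring
  have ea : (q - 1) / q = 1 / p := by rw [hp, one_div_div]
  have eb : (q - 1) / (2 * (2 * q - 1)) = 1 / 2 * (1 / (p + 1)) := by
    rw [hp]
    rw [show q / (q - 1) + 1 = (2 * q - 1) / (q - 1) by field_simp; ring]
    rw [one_div_div]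
    have h2q : (2 * q - 1) ≠ 0 := (show (0:ℝ) < 2 * q - 1 by linarith).ne'
    field_simp
  have ec : (1:ℝ) / (2 * (s + 1)) = 1 / 2 * (1 / (s + 1)) := by
    rw [one_div (2 * (s + 1)), mul_inv]; ring
  have e2 : (p + 1) / p + 1 / q = 2 := by rw [hp]; field_simp; ring
  have L : (1 / (2 * h)) * ((h ^ (p + 1) / (p + 1)) ^ (1 / p) * (h / (s + 1)) ^ (1 / q))
      = h / 2 * ((1 / (p + 1)) ^ (1 / p) * (1 / (s + 1)) ^ (1 / q)) := by
    rw [show h ^ (p + 1) / (p + 1) = h ^ (p + 1) * (1 / (p + 1)) by ring,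
      Real.mul_rpow (by positivity) (by positivity),
      show h / (s + 1) = h * (1 / (s + 1)) by ring,
      Real.mul_rpow hh.le (by positivity),
      ← Real.rpow_mul hh.le, show (p + 1) * (1 / p) = (p + 1) / p by ring]
    have eh : h ^ ((p + 1) / p) * h ^ (1 / q) = h * h := by
      rw [← Real.rpow_add hh, e2]
      rw [show (2:ℝ) = ((2:ℕ):ℝ) by norm_num, Real.rpow_natCast]; ring
    field_simp
    linear_combination eh
  have R : h * ((q - 1) / (2 * (2 * q - 1))) ^ ((q - 1) / q) * (1 / (2 * (s + 1))) ^ (1 / q)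
      = h / 2 * ((1 / (p + 1)) ^ (1 / p) * (1 / (s + 1)) ^ (1 / q)) := by
    rw [ea, eb, ec, Real.mul_rpow (by norm_num) (by positivity),
      Real.mul_rpow (by norm_num) (by positivity)]
    have ehalf : ((1:ℝ) / 2) ^ (1 / p) * ((1:ℝ) / 2) ^ (1 / q) = 1 / 2 := by
      rw [← Real.rpow_add (by norm_num), e4, Real.rpow_one]
    linear_combination h * (1 / (p + 1)) ^ (1 / p) * (1 / (s + 1)) ^ (1 / q) * ehalf
  exact L.trans R.symm


theorem sconvex_trapezoid_bound_midpoint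
    (s a b c d q : ℝ) (hs : s ∈ Set.Ioo (0:ℝ) 1) (ha : 0 ≤ a) (hab : a < b)
    (hq : 1 < q) (hsub : Set.Icc a b ⊆ Set.Ioo c d)
    (f f' : ℝ → ℝ)
    (hdiff : ∀ x ∈ Set.Ioo c d, HasDerivAt f (f' x) x)
    (hsconv : ∀ u ∈ Set.Icc a b, ∀ v ∈ Set.Icc a b, ∀ t ∈ Set.Icc (0:ℝ) 1,
      |f' (t * u + (1 - t) * v)| ^ q ≤ t ^ s * |f' u| ^ q + (1 - t) ^ s * |f' v| ^ q) :
    |(f a + f b) / 2 - (1 / (b - a)) * ∫ x in a..b, f x|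
      ≤ ((b - a) / 2) * ((q - 1) / (2 * (2 * q - 1))) ^ ((q - 1) / q)
        * (1 / (2 * (s + 1))) ^ (1 / q)
        * ((|f' a| ^ q + |f' ((a + b) / 2)| ^ q) ^ (1 / q)
            + (|f' ((a + b) / 2)| ^ q + |f' b| ^ q) ^ (1 / q)) := by
  obtain ⟨hs0, hs1⟩ := hs
  have hq0 : (0:ℝ) < q := lt_trans one_pos hq
  have hba : (0:ℝ) < b - a := by linarith
  set m : ℝ := (a + b) / 2 with hm
  have ham : a < m := by rw [hm]; linarith
  have hmb : m < b := by rw [hm]; linarith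
  have hma : m - a = (b - a) / 2 := by rw [hm]; ring
  have hbm : b - m = (b - a) / 2 := by rw [hm]; ring
  set p : ℝ := q / (q - 1) with hpdef
  have hderiv_eq : ∀ x ∈ Set.Icc a b, deriv f x = f' x := fun x hx => (hdiff x (hsub hx)).deriv
  have hmeas : ∀ u v : ℝ, Set.Ioc u v ⊆ Set.Icc a b →
      AEStronglyMeasurable f' (volume.restrict (Set.Ioc u v)) := by
    intro u v huv
    refine (measurable_deriv f).aestronglyMeasurable.congr ?_
    exact (ae_restrict_iff' measurableSet_Ioc).2 (ae_of_all _ fun x hx => hderiv_eq x (huv hx))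
  have hIa : a ∈ Set.Icc a b := ⟨le_refl a, hab.le⟩
  have hIb : b ∈ Set.Icc a b := ⟨hab.le, le_refl b⟩
  have hIm : m ∈ Set.Icc a b := ⟨ham.le, hmb.le⟩
  -- crude bound on |f'| on [a,b]
  have hbd : ∀ x ∈ Set.Icc a b, |f' x| ≤ (|f' a| ^ q + |f' b| ^ q) ^ (1 / q) := by
    intro x hx
    have ht : (b - x) / (b - a) ∈ Set.Icc (0:ℝ) 1 :=
      ⟨div_nonneg (by linarith [hx.2]) hba.le, by rw [div_le_one hba]; linarith [hx.1]⟩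
    have h1 := hsconv a hIa b hIb _ ht
    have hxx : (b - x) / (b - a) * a + (1 - (b - x) / (b - a)) * b = x := by
      field_simp; ring
    rw [hxx] at h1
    have h2 : |f' x| ^ q ≤ |f' a| ^ q + |f' b| ^ q := by
      have t1 : ((b - x) / (b - a)) ^ s ≤ 1 := Real.rpow_le_one ht.1 ht.2 hs0.le
      have t2 : (1 - (b - x) / (b - a)) ^ s ≤ 1 :=
        Real.rpow_le_one (by linarith [ht.2]) (by linarith [ht.1]) hs0.le
      have n1 : (0:ℝ) ≤ |f' a| ^ q := Real.rpow_nonneg (abs_nonneg _) q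
      have n2 : (0:ℝ) ≤ |f' b| ^ q := Real.rpow_nonneg (abs_nonneg _) q
      nlinarith [h1, t1, t2, n1, n2]
    calc |f' x| = (|f' x| ^ q) ^ (1 / q) := by
          rw [← Real.rpow_mul (abs_nonneg _), mul_one_div_cancel hq0.ne', Real.rpow_one]
      _ ≤ _ := Real.rpow_le_rpow (Real.rpow_nonneg (abs_nonneg _) _) h2 (by positivity)
  -- integrability of f'
  have hint : ∀ u v : ℝ, a ≤ u → u ≤ v → v ≤ b → IntervalIntegrable f' volume u v := by
    intro u v hau huv hvb
    rw [intervalIntegrable_iff, uIoc_of_le huv]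
    have hsub2 : Set.Ioc u v ⊆ Set.Icc a b := fun x hx =>
      ⟨le_trans hau hx.1.le, le_trans hx.2 hvb⟩
    haveI : Fact (volume (Set.Ioc u v) < ⊤) := ⟨measure_Ioc_lt_top⟩
    refine memLp_one_iff_integrable.mp ?_
    refine MeasureTheory.MemLp.of_bound (hmeas u v hsub2) ((|f' a| ^ q + |f' b| ^ q) ^ (1 / q)) ?_
    exact (ae_restrict_iff' measurableSet_Ioc).2 (ae_of_all _ fun x hx => by
      rw [Real.norm_eq_abs]; exact hbd x (hsub2 hx))
  have hintm : ∀ u v : ℝ, a ≤ u → u ≤ v → v ≤ b →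
      IntervalIntegrable (fun x => (x - m) * f' x) volume u v := fun u v hau huv hvb =>
    (hint u v hau huv hvb).continuousOn_mul (continuous_id.sub continuous_const).continuousOn
  -- integration by parts
  have hparts := intervalIntegral.integral_mul_deriv_eq_deriv_mul
      (u := fun x => x - m) (u' := fun _ => (1:ℝ)) (v := f) (v' := f')
      (fun x _ => (hasDerivAt_id x).sub_const m)
      (fun x hx => hdiff x (hsub ((Set.uIcc_of_le hab.le) ▸ hx)))
      intervalIntegrable_const (hint a b le_rfl hab.le le_rfl)
  simp only [one_mul] at hparts
  have hkey : (f a + f b) / 2 - (1 / (b - a)) * ∫ x in a..b, f x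
      = (1 / (b - a)) * ∫ x in a..b, (x - m) * f' x := by
    rw [hparts, hm]; field_simp; ring
  have hsplit : ∫ x in a..b, (x - m) * f' x
      = (∫ x in a..m, (x - m) * f' x) + ∫ x in m..b, (x - m) * f' x :=
    (intervalIntegral.integral_add_adjacent_intervals
      (hintm a m le_rfl ham.le hmb.le) (hintm m b ham.le hmb.le le_rfl)).symm
  have habs1 : |∫ x in a..m, (x - m) * f' x| ≤ ∫ x in a..m, (m - x) * |f' x| := by
    calc |∫ x in a..m, (x - m) * f' x| ≤ ∫ x in a..m, |x - m| * |f' x| := by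
          simpa [Real.norm_eq_abs, abs_mul] using
            intervalIntegral.norm_integral_le_integral_norm (μ := volume)
              (f := fun x => (x - m) * f' x) ham.le
      _ = ∫ x in a..m, (m - x) * |f' x| := intervalIntegral.integral_congr (fun x hx => by
          rw [Set.uIcc_of_le ham.le] at hx
          rw [abs_of_nonpos (by linarith [hx.2] : x - m ≤ 0)]; ring)
  have habs2 : |∫ x in m..b, (x - m) * f' x| ≤ ∫ x in m..b, (x - m) * |f' x| := by
    calc |∫ x in m..b, (x - m) * f' x| ≤ ∫ x in m..b, |x - m| * |f' x| := by
          simpa [Real.norm_eq_abs, abs_mul] using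
            intervalIntegral.norm_integral_le_integral_norm (μ := volume)
              (f := fun x => (x - m) * f' x) hmb.le
      _ = ∫ x in m..b, (x - m) * |f' x| := intervalIntegral.integral_congr (fun x hx => by
          rw [Set.uIcc_of_le hmb.le] at hx
          rw [abs_of_nonneg (by linarith [hx.1] : (0:ℝ) ≤ x - m)])
  -- s-convexity bounds on the halves
  have hb1 : ∀ x ∈ Set.Icc a m,
      |f' x| ^ q ≤ ((m - x) ^ s * |f' a| ^ q + (x - a) ^ s * |f' m| ^ q) / (m - a) ^ s := by
    intro x hx
    have hma0 : (0:ℝ) < m - a := by linarith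
    have ht : (m - x) / (m - a) ∈ Set.Icc (0:ℝ) 1 :=
      ⟨div_nonneg (by linarith [hx.2]) hma0.le, by rw [div_le_one hma0]; linarith [hx.1]⟩
    have h1 := hsconv a hIa m hIm _ ht
    have hxx : (m - x) / (m - a) * a + (1 - (m - x) / (m - a)) * m = x := by
      field_simp; ring
    rw [hxx] at h1
    have h1mt : 1 - (m - x) / (m - a) = (x - a) / (m - a) := by field_simp; ring
    rw [h1mt] at h1
    rw [Real.div_rpow (by linarith [hx.2]) hma0.le,
      Real.div_rpow (by linarith [hx.1]) hma0.le] at h1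
    calc |f' x| ^ q ≤ (m - x) ^ s / (m - a) ^ s * |f' a| ^ q
          + (x - a) ^ s / (m - a) ^ s * |f' m| ^ q := h1
      _ = _ := by ring
  have hb2 : ∀ x ∈ Set.Icc m b,
      |f' x| ^ q ≤ ((b - x) ^ s * |f' m| ^ q + (x - m) ^ s * |f' b| ^ q) / (b - m) ^ s := by
    intro x hx
    have hbm0 : (0:ℝ) < b - m := by linarith
    have ht : (b - x) / (b - m) ∈ Set.Icc (0:ℝ) 1 :=
      ⟨div_nonneg (by linarith [hx.2]) hbm0.le, by rw [div_le_one hbm0]; linarith [hx.1]⟩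
    have h1 := hsconv m hIm b hIb _ ht
    have hxx : (b - x) / (b - m) * m + (1 - (b - x) / (b - m)) * b = x := by
      field_simp; ring
    rw [hxx] at h1
    have h1mt : 1 - (b - x) / (b - m) = (x - m) / (b - m) := by field_simp; ring
    rw [h1mt] at h1
    rw [Real.div_rpow (by linarith [hx.2]) hbm0.le,
      Real.div_rpow (by linarith [hx.1]) hbm0.le] at h1
    calc |f' x| ^ q ≤ (b - x) ^ s / (b - m) ^ s * |f' m| ^ q
          + (x - m) ^ s / (b - m) ^ s * |f' b| ^ q := h1
      _ = _ := by ring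
  have H1 := half_holder f' a m (|f' a| ^ q) (|f' m| ^ q) p q s ham hq hpdef hs0
    (hmeas a m (fun x hx => ⟨hx.1.le, le_trans hx.2 hmb.le⟩))
    (Real.rpow_nonneg (abs_nonneg _) _) (Real.rpow_nonneg (abs_nonneg _) _) hb1
  have H2 := half_holder2 f' m b (|f' m| ^ q) (|f' b| ^ q) p q s hmb hq hpdef hs0
    (hmeas m b (fun x hx => ⟨le_trans ham.le hx.1.le, hx.2⟩))
    (Real.rpow_nonneg (abs_nonneg _) _) (Real.rpow_nonneg (abs_nonneg _) _) hb2
  rw [hma] at H1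
  rw [hbm] at H2
  have hconst := const_id p q s ((b - a) / 2) hq hpdef hs0 (by linarith)
  set A1 : ℝ := |f' a| ^ q + |f' m| ^ q with hA1
  set A2 : ℝ := |f' m| ^ q + |f' b| ^ q with hA2
  have hA1n : (0:ℝ) ≤ A1 := by
    rw [hA1]; positivity
  have hA2n : (0:ℝ) ≤ A2 := by
    rw [hA2]; positivity
  have hfac1 : ((b - a) / 2 / (s + 1) * A1) ^ (1 / q)
      = ((b - a) / 2 / (s + 1)) ^ (1 / q) * A1 ^ (1 / q) :=
    Real.mul_rpow (by positivity) hA1n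
  have hfac2 : ((b - a) / 2 / (s + 1) * A2) ^ (1 / q)
      = ((b - a) / 2 / (s + 1)) ^ (1 / q) * A2 ^ (1 / q) :=
    Real.mul_rpow (by positivity) hA2n
  calc |(f a + f b) / 2 - (1 / (b - a)) * ∫ x in a..b, f x|
      = (1 / (b - a)) * |∫ x in a..b, (x - m) * f' x| := by
        rw [hkey, abs_mul, abs_of_nonneg (by positivity : (0:ℝ) ≤ 1 / (b - a))]
    _ ≤ (1 / (b - a)) * (|∫ x in a..m, (x - m) * f' x| + |∫ x in m..b, (x - m) * f' x|) := by
        refine mul_le_mul_of_nonneg_left ?_ (by positivity)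
        rw [hsplit]; exact abs_add_le _ _
    _ ≤ (1 / (b - a)) * ((((b - a) / 2) ^ (p + 1) / (p + 1)) ^ (1 / p)
          * ((b - a) / 2 / (s + 1) * A1) ^ (1 / q)
          + (((b - a) / 2) ^ (p + 1) / (p + 1)) ^ (1 / p)
          * ((b - a) / 2 / (s + 1) * A2) ^ (1 / q)) := by
        refine mul_le_mul_of_nonneg_left ?_ (by positivity)
        exact add_le_add (habs1.trans H1) (habs2.trans H2)
    _ = ((b - a) / 2) * ((q - 1) / (2 * (2 * q - 1))) ^ ((q - 1) / q)
          * (1 / (2 * (s + 1))) ^ (1 / q) * (A1 ^ (1 / q) + A2 ^ (1 / q)) := by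
        rw [hfac1, hfac2]
        have h2h : (1:ℝ) / (b - a) = 1 / (2 * ((b - a) / 2)) := by ring
        rw [h2h] at *
        linear_combination (A1 ^ (1 / q) + A2 ^ (1 / q)) * hconst
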